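/- For a uniformly random bay with C+1 columns and h containers per column, the probability that no column is 'special' is at most exp(-theta (C+1)), where theta = (1/(8h)) * (2/(h(h+1)))^{2h}, provided C >= h+1. -/

import Mathlib

open Finset

namespace Stmt13

open scoped Classical

/-- descending factorial comparison -/
lemma descFactorial_le (x : ℕ) : ∀ (s a b : ℕ), a ≤ x * (b + 1 - s) →
    a.descFactorial s ≤ x ^ s * b.descFactorial s := by
  intro s
  induction s with
  | zero => intro a b _; simp
  | succ s ih =>
    intro a b hab
    rw [Nat.descFactorial_succ, Nat.descFactorial_succ, pow_succ]
    have h1 : a - s ≤ x * (b - s) := le_trans (Nat.sub_le a s) (by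
      calc a ≤ x * (b + 1 - (s+1)) := hab
        _ = x * (b - s) := by congr 1; omega)
    have h2 : a ≤ x * (b + 1 - s) :=
      hab.trans (Nat.mul_le_mul_left x (by omega))
    calc (a - s) * a.descFactorial s ≤ (x * (b - s)) * (x ^ s * b.descFactorial s) :=
          Nat.mul_le_mul h1 (ih a b h2)
      _ = x ^ s * x * ((b - s) * b.descFactorial s) := by ring
lemma choose_le_of_desc {a b x s : ℕ} (hd : a.descFactorial s ≤ x ^ s * b.descFactorial s) :
    a.choose s ≤ x ^ s * b.choose s := by
  have ha := Nat.descFactorial_eq_factorial_mul_choose a s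
  have hb := Nat.descFactorial_eq_factorial_mul_choose b s
  rw [ha, hb] at hd
  have := Nat.factorial_pos s
  calc a.choose s = (s.factorial * a.choose s) / s.factorial := by
        rw [Nat.mul_div_cancel_left _ this]
    _ ≤ (x ^ s * (s.factorial * b.choose s)) / s.factorial := Nat.div_le_div_right hd
    _ = (s.factorial * (x ^ s * b.choose s)) / s.factorial := by ring_nf
    _ = x ^ s * b.choose s := Nat.mul_div_cancel_left _ this


/-- key binomial bound -/
lemma choose_bound (h C : ℕ) (hh : 1 ≤ h) (hC : h + 1 ≤ C) {t : ℕ} (ht : t < h) :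
    Nat.choose ((h - 1) * (C + 1)) (h - t)
      ≤ (h * (h + 1) / 2 - 1) ^ (h - t) * Nat.choose (C + 1 - t) (h - t) := by
  apply choose_le_of_desc
  apply descFactorial_le
  -- (h-1)*(C+1) ≤ x * (C+1-t+1-(h-t)) = x * (C+2-h)
  have hx2 : 2 * (h * (h + 1) / 2 - 1) = h * h + h - 2 := by
    have := Nat.even_mul_succ_self h
    obtain ⟨w, hw⟩ := this
    have : h * (h + 1) / 2 = w := by omega
    have h2 : h * (h+1) = h*h + h := by ring
    omega
  have harg : C + 1 - t + 1 - (h - t) = C + 2 - h := by omega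
  rw [harg]
  -- 2*((h-1)*(C+1)) ≤ (h*h+h-2)*(C+2-h)
  have key : 2 * ((h - 1) * (C + 1)) ≤ (h * h + h - 2) * (C + 2 - h) := by
    obtain ⟨g, rfl⟩ : ∃ g, h = g + 1 := ⟨h - 1, by omega⟩
    obtain ⟨e, he⟩ : ∃ e, C + 2 - (g + 1) = e + 3 := ⟨C - g - 2, by omega⟩
    have hCe : C + 1 = g + e + 3 := by omega
    rw [he, hCe]
    have h1 : (g+1)*(g+1)+(g+1)-2 = g*g + 3*g := by ring_nf; omega
    rw [h1]
    simp only [Nat.add_sub_cancel]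
    nlinarith [Nat.zero_le (g*g*e), Nat.zero_le (g*e)]
  have hexp : 2 * ((h * (h + 1) / 2 - 1) * (C + 2 - h)) = (h * h + h - 2) * (C + 2 - h) := by
    rw [← hx2]; ring
  omega


variable (h C : ℕ)

/-- slots of column `i`. -/
def colI (i : ℕ) : Finset (Fin (h * (C + 1))) :=
  univ.filter (fun j => (j : ℕ) / h = i)

/-- subsets of size `C+1` (positions of the big labels) avoiding full columns `< k`. -/
def A (k : ℕ) : Finset (Finset (Fin (h * (C + 1)))) :=
  (powersetCard (C + 1) univ).filter (fun S => ∀ i < k, ¬ colI h C i ⊆ S)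

lemma mem_colI {i : ℕ} {j : Fin (h * (C + 1))} : j ∈ colI h C i ↔ (j : ℕ) / h = i := by
  simp [colI]

lemma card_colI (hh : 1 ≤ h) {i : ℕ} (hi : i ≤ C) : (colI h C i).card = h := by
  classical
  rw [← Finset.card_image_of_injective _ Fin.val_injective]
  have : (colI h C i).image Fin.val = Finset.Ico (h * i) (h * i + h) := by
    ext a
    simp only [Finset.mem_image, Finset.mem_Ico, mem_colI]
    constructor
    · rintro ⟨j, hj, rfl⟩
      have h1 := Nat.div_add_mod (j : ℕ) h
      have h2 := Nat.mod_lt (j : ℕ) (by omega : 0 < h)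
      rw [hj] at h1
      omega
    · rintro ⟨h1, h2⟩
      have ha : a < h * (C + 1) := by
        calc a < h * i + h := h2
        _ = h * (i+1) := by ring
        _ ≤ h * (C+1) := Nat.mul_le_mul_left _ (by omega)
      refine ⟨⟨a, ha⟩, ?_, rfl⟩
      show a / h = i
      exact Nat.div_eq_of_lt_le (by rw [Nat.mul_comm]; exact h1)
        (by rw [(by ring : (i+1)*h = h*i+h)]; exact h2)
  rw [this]
  simp


noncomputable def Phi (π : Equiv.Perm (Fin (h * (C + 1)))) : Finset (Fin (h * (C + 1))) :=
  univ.filter (fun j => (h - 1) * (C + 1) ≤ (π j : ℕ))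

lemma mem_Phi {π : Equiv.Perm (Fin (h * (C + 1)))} {j : Fin (h * (C + 1))} :
    j ∈ Phi h C π ↔ (h - 1) * (C + 1) ≤ (π j : ℕ) := by simp [Phi]

lemma aux_arith (hh : 1 ≤ h) : (h - 1) * (C + 1) + (C + 1) = h * (C + 1) := by
  cases h with
  | zero => omega
  | succ g => simp [Nat.succ_mul]

lemma Phi_card (hh : 1 ≤ h) (π : Equiv.Perm (Fin (h * (C + 1)))) :
    (Phi h C π).card = C + 1 := by
  have harith := aux_arith h C hh
  have hbij : (Phi h C π).card
      = (univ.filter (fun v : Fin (h * (C + 1)) => (h - 1) * (C + 1) ≤ (v : ℕ))).card := by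
    apply Finset.card_bij (fun j _ => π j)
    · intro j hj
      rw [mem_Phi] at hj
      simp [hj]
    · intro j₁ h₁ j₂ h₂ he
      exact π.injective he
    · intro v hv
      refine ⟨π.symm v, ?_, by simp⟩
      rw [mem_Phi, Equiv.apply_symm_apply]
      simpa using hv
  rw [hbij, ← Finset.card_image_of_injective _ Fin.val_injective]
  have himg : (univ.filter (fun v : Fin (h * (C + 1)) => (h - 1) * (C + 1) ≤ (v : ℕ))).image
      Fin.val = Finset.Ico ((h - 1) * (C + 1)) (h * (C + 1)) := by
    ext b
    simp only [Finset.mem_image, Finset.mem_Ico, Finset.mem_filter, Finset.mem_univ, true_and]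
    constructor
    · rintro ⟨v, hv, rfl⟩
      exact ⟨hv, v.isLt⟩
    · rintro ⟨h1, h2⟩
      exact ⟨⟨b, h2⟩, h1, rfl⟩
  rw [himg, Nat.card_Ico]
  omega


lemma mem_A {k : ℕ} {S : Finset (Fin (h * (C + 1)))} :
    S ∈ A h C k ↔ S.card = C + 1 ∧ ∀ i < k, ¬ colI h C i ⊆ S := by
  simp [A, Finset.mem_powersetCard, Finset.subset_univ]

lemma per_t (hh : 1 ≤ h) (hC : h + 1 ≤ C) {k : ℕ} (hk : k ≤ C) {t : ℕ} (ht : t < h) :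
    ((A h C (k+1)).filter (fun S => (S ∩ colI h C k).card = t)).card
        * Nat.choose (C + 1 - t) (h - t)
      ≤ ((A h C k).filter (fun S => colI h C k ⊆ S)).card *
        (Nat.choose h (h - t) * Nat.choose ((h - 1) * (C + 1)) (h - t)) := by
  classical
  set K := colI h C k with hKdef
  have hKcard : K.card = h := card_colI h C hh (by omega)
  set At := (A h C (k+1)).filter (fun S => (S ∩ K).card = t) with hAtdef
  set B := (A h C k).filter (fun S => K ⊆ S) with hBdef
  have hAtfacts : ∀ S ∈ At, S.card = C + 1 ∧ (S ∩ K).card = t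
      ∧ (∀ i < k + 1, ¬ colI h C i ⊆ S) := by
    intro S hS
    rw [hAtdef, mem_filter, mem_A] at hS
    exact ⟨hS.1.1, hS.2, hS.1.2⟩
  have hsdiffcard : ∀ S ∈ At, (S \ K).card = C + 1 - t := by
    intro S hS
    obtain ⟨h1, h2, -⟩ := hAtfacts S hS
    have h3 := card_sdiff_add_card_inter S K
    omega
  have hL : At.card * Nat.choose (C + 1 - t) (h - t)
      = (At.sigma (fun S => (S \ K).powersetCard (h - t))).card := by
    rw [card_sigma]
    have hterm : ∀ S ∈ At, ((S \ K).powersetCard (h - t)).card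
        = Nat.choose (C + 1 - t) (h - t) := by
      intro S hS
      rw [card_powersetCard, hsdiffcard S hS]
    rw [Finset.sum_congr rfl hterm, sum_const, smul_eq_mul]
  have hR : (B.sigma (fun S' => K.powersetCard (h - t) ×ˢ (univ \ S').powersetCard (h - t))).card
      = B.card * (Nat.choose h (h - t) * Nat.choose ((h - 1) * (C + 1)) (h - t)) := by
    rw [card_sigma]
    have hterm : ∀ S' ∈ B, (K.powersetCard (h - t) ×ˢ (univ \ S').powersetCard (h - t)).card
        = Nat.choose h (h - t) * Nat.choose ((h - 1) * (C + 1)) (h - t) := by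
      intro S' hS'
      have hcard : S'.card = C + 1 := by
        rw [hBdef, mem_filter, mem_A] at hS'
        exact hS'.1.1
      have huc : (univ \ S').card = (h - 1) * (C + 1) := by
        rw [card_sdiff_of_subset (subset_univ S'), card_univ, Fintype.card_fin, hcard]
        have : (h - 1) * (C + 1) + (C + 1) = h * (C + 1) := by
          cases h with
          | zero => omega
          | succ g => simp [Nat.succ_mul]
        omega
      rw [card_product, card_powersetCard, card_powersetCard, hKcard, huc]
    rw [Finset.sum_congr rfl hterm, sum_const, smul_eq_mul]
  rw [hL, ← hR]
  apply Finset.card_le_card_of_injOn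
    (fun p => ⟨(p.1 \ p.2) ∪ (K \ p.1), (K \ p.1, p.2)⟩)
  · -- maps into
    rintro ⟨S, R⟩ hp
    rw [mem_coe, mem_sigma] at hp
    obtain ⟨hSAt, hRmem⟩ := hp
    rw [mem_powersetCard] at hRmem
    obtain ⟨hRsub, hRcard⟩ := hRmem
    obtain ⟨hScard, hSKt, hpred⟩ := hAtfacts S hSAt
    have hRS : R ⊆ S := hRsub.trans sdiff_subset
    have hRdisjK : Disjoint R K := Finset.sdiff_disjoint.mono_left hRsub
    have hMcard : (K \ S).card = h - t := by
      have h3 := card_sdiff_add_card_inter K S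
      rw [inter_comm] at h3
      omega
    have hdisj : Disjoint (S \ R) (K \ S) :=
      (Finset.sdiff_disjoint.mono_right sdiff_subset).symm
    have hS'card : ((S \ R) ∪ (K \ S)).card = C + 1 := by
      rw [card_union_of_disjoint hdisj, card_sdiff_of_subset hRS, hScard, hRcard, hMcard]
      omega
    have hnotKS : ¬ K ⊆ S := hpred k (by omega)
    have hKsub : K ⊆ (S \ R) ∪ (K \ S) := by
      intro j hj
      by_cases hjS : j ∈ S
      · exact mem_union_left _ (mem_sdiff.mpr ⟨hjS, fun hjR =>
          Finset.disjoint_left.mp hRdisjK hjR hj⟩)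
      · exact mem_union_right _ (mem_sdiff.mpr ⟨hj, hjS⟩)
    rw [mem_coe, mem_sigma, mem_product, mem_powersetCard, mem_powersetCard]
    refine ⟨?_, ⟨sdiff_subset, hMcard⟩, ?_, hRcard⟩
    · -- S' ∈ B
      rw [hBdef, mem_filter, mem_A]
      refine ⟨⟨hS'card, ?_⟩, hKsub⟩
      intro i hik hsub
      obtain ⟨j, hjcol, hjS⟩ := Finset.not_subset.mp (hpred i (by omega))
      have hj' := hsub hjcol
      rcases mem_union.mp hj' with hj1 | hj2
      · exact hjS (mem_sdiff.mp hj1).1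
      · have hjK : j ∈ K := (mem_sdiff.mp hj2).1
        rw [hKdef, mem_colI] at hjK
        rw [mem_colI] at hjcol
        omega
    · -- R ⊆ univ \ S'
      intro j hjR
      rw [mem_sdiff]
      refine ⟨mem_univ _, fun hj' => ?_⟩
      rcases mem_union.mp hj' with hj1 | hj2
      · exact (mem_sdiff.mp hj1).2 hjR
      · exact (mem_sdiff.mp hj2).2 (hRS hjR)
  · -- injective
    have recover : ∀ p ∈ At.sigma (fun S => (S \ K).powersetCard (h - t)),
        ((p.1 \ p.2 ∪ (K \ p.1)) \ (K \ p.1)) ∪ p.2 = p.1 := by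
      rintro ⟨S, R⟩ hp
      rw [mem_sigma] at hp
      obtain ⟨hSAt, hRmem⟩ := hp
      rw [mem_powersetCard] at hRmem
      have hRS : R ⊆ S := hRmem.1.trans sdiff_subset
      have hdisj : Disjoint (S \ R) (K \ S) :=
        (Finset.sdiff_disjoint.mono_right sdiff_subset).symm
      rw [union_sdiff_distrib, sdiff_self, bot_eq_empty, union_empty,
        _root_.sdiff_eq_self_iff_disjoint.mpr hdisj.symm, sdiff_union_of_subset hRS]
    rintro ⟨S₁, R₁⟩ h1 ⟨S₂, R₂⟩ h2 heq
    have hU := congrArg Sigma.fst heq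
    have hsnd := congrArg (fun p : (_ : Finset (Fin (h * (C + 1)))) ×
        (Finset (Fin (h * (C + 1))) × Finset (Fin (h * (C + 1)))) => p.snd) heq
    simp only at hU hsnd
    have hM := congrArg Prod.fst hsnd
    have hRR := congrArg Prod.snd hsnd
    simp only at hM hRR
    have hS : S₁ = S₂ := by
      have r1 := recover ⟨S₁, R₁⟩ h1
      have r2 := recover ⟨S₂, R₂⟩ h2
      simp only at r1 r2
      rw [← r1, ← r2, hU, hM, hRR]
    subst hS
    subst hRR
    rfl

lemma w_ge_one (hh : 1 ≤ h) : 1 ≤ h * (h + 1) / 2 := by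
  have h2 : 2 ≤ h * (h + 1) := by nlinarith
  omega

lemma sum_binom (hh : 1 ≤ h) :
    ∑ t ∈ range h, Nat.choose h (h - t) * (h * (h + 1) / 2 - 1) ^ (h - t)
      = (h * (h + 1) / 2) ^ h - 1 := by
  set w := h * (h + 1) / 2 with hw
  have hw1 : 1 ≤ w := w_ge_one h hh
  have e1 : ∀ t ∈ range h, Nat.choose h (h - t) * (w - 1) ^ (h - t)
      = (fun j => Nat.choose h (j + 1) * (w - 1) ^ (j + 1)) (h - 1 - t) := by
    intro t htr
    rw [mem_range] at htr
    have : h - 1 - t + 1 = h - t := by omega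
    simp only [this]
  rw [Finset.sum_congr rfl e1]
  rw [Finset.sum_range_reflect (fun j => Nat.choose h (j + 1) * (w - 1) ^ (j + 1)) h]
  have e3 : (w : ℕ) ^ h = ∑ j ∈ range (h + 1), Nat.choose h j * (w - 1) ^ j := by
    obtain ⟨v, hv⟩ : ∃ v, w = v + 1 := ⟨w - 1, by omega⟩
    rw [hv, Nat.add_sub_cancel, add_pow]
    apply Finset.sum_congr rfl
    intro j _
    simp [Nat.cast_id, one_pow, mul_comm]
  have e2 := Finset.sum_range_succ' (fun j => Nat.choose h j * (w - 1) ^ j) h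
  rw [e2] at e3
  simp only [Nat.choose_zero_right, pow_zero, mul_one, one_mul] at e3
  omega

lemma step (hh : 1 ≤ h) (hC : h + 1 ≤ C) {k : ℕ} (hk : k ≤ C) :
    (A h C (k+1)).card * (h * (h + 1) / 2) ^ h
      ≤ (A h C k).card * ((h * (h + 1) / 2) ^ h - 1) := by
  classical
  set K := colI h C k with hKdef
  set B := (A h C k).filter (fun S => K ⊆ S) with hBdef
  set w := h * (h + 1) / 2 with hw
  have hw1 : 1 ≤ w := w_ge_one h hh
  have hKcard : K.card = h := card_colI h C hh (by omega)
  have hsplit : (A h C (k+1)).card + B.card = (A h C k).card := by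
    have hAeq : A h C (k+1) = (A h C k).filter (fun S => ¬ K ⊆ S) := by
      ext S
      rw [mem_filter, mem_A, mem_A]
      constructor
      · intro hS
        exact ⟨⟨hS.1, fun i hi => hS.2 i (by omega)⟩, hS.2 k (by omega)⟩
      · intro hS
        refine ⟨hS.1.1, fun i hi => ?_⟩
        rcases Nat.lt_succ_iff_lt_or_eq.mp hi with hi' | rfl
        · exact hS.1.2 i hi'
        · exact hS.2
    rw [hAeq, hBdef, add_comm, card_filter_add_card_filter_not]
  have hpart : (A h C (k+1)).card
      = ∑ t ∈ range h, ((A h C (k+1)).filter (fun S => (S ∩ K).card = t)).card := by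
    apply card_eq_sum_card_fiberwise
    intro S hS
    rw [mem_coe, mem_range]
    have hle : (S ∩ K).card ≤ h :=
      le_trans (card_le_card inter_subset_right) (le_of_eq hKcard)
    rcases Nat.lt_or_ge (S ∩ K).card h with h1 | h1
    · exact h1
    · exfalso
      have heq : S ∩ K = K := Finset.eq_of_subset_of_card_le inter_subset_right
        (by omega)
      have hKS : K ⊆ S := by rw [← heq]; exact inter_subset_left
      exact ((mem_A h C).mp hS).2 k (by omega) hKS
  have hpt : ∀ t ∈ range h, ((A h C (k+1)).filter (fun S => (S ∩ K).card = t)).card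
      ≤ B.card * (Nat.choose h (h - t) * (w - 1) ^ (h - t)) := by
    intro t htr
    rw [mem_range] at htr
    have h1 := per_t h C hh hC hk htr
    have h2 := choose_bound h C hh hC htr
    have hpos : 0 < Nat.choose (C + 1 - t) (h - t) := Nat.choose_pos (by omega)
    apply Nat.le_of_mul_le_mul_right _ hpos
    calc ((A h C (k+1)).filter (fun S => (S ∩ K).card = t)).card * Nat.choose (C+1-t) (h-t)
        ≤ B.card * (Nat.choose h (h - t) * Nat.choose ((h - 1) * (C + 1)) (h - t)) := h1
      _ ≤ B.card * (Nat.choose h (h - t) * ((w - 1) ^ (h - t) * Nat.choose (C+1-t) (h-t))) := by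
          exact Nat.mul_le_mul_left _ (Nat.mul_le_mul_left _ h2)
      _ = B.card * (Nat.choose h (h - t) * (w - 1) ^ (h - t)) * Nat.choose (C+1-t) (h-t) := by
          ring
  have hmain : (A h C (k+1)).card ≤ B.card * (w ^ h - 1) := by
    calc (A h C (k+1)).card
        = ∑ t ∈ range h, ((A h C (k+1)).filter (fun S => (S ∩ K).card = t)).card := hpart
      _ ≤ ∑ t ∈ range h, B.card * (Nat.choose h (h - t) * (w - 1) ^ (h - t)) :=
          Finset.sum_le_sum hpt
      _ = B.card * ∑ t ∈ range h, Nat.choose h (h - t) * (w - 1) ^ (h - t) := by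
          rw [Finset.mul_sum]
      _ = B.card * (w ^ h - 1) := by rw [sum_binom h hh]
  have hQ1 : 1 ≤ w ^ h := Nat.one_le_pow _ _ (by omega)
  calc (A h C (k+1)).card * w ^ h
      = (A h C (k+1)).card * (w ^ h - 1) + (A h C (k+1)).card := by
        obtain ⟨u, hu⟩ : ∃ u, w ^ h = u + 1 := ⟨w ^ h - 1, by omega⟩
        rw [hu, Nat.add_sub_cancel, Nat.mul_succ]
    _ ≤ (A h C (k+1)).card * (w ^ h - 1) + B.card * (w ^ h - 1) := by omega
    _ = ((A h C (k+1)).card + B.card) * (w ^ h - 1) := by rw [Nat.add_mul]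
    _ = (A h C k).card * (w ^ h - 1) := by rw [hsplit]

lemma iterate (hh : 1 ≤ h) (hC : h + 1 ≤ C) : ∀ k, k ≤ C + 1 →
    (A h C k).card * ((h * (h + 1) / 2) ^ h) ^ k
      ≤ (powersetCard (C + 1) (univ : Finset (Fin (h * (C + 1))))).card
        * ((h * (h + 1) / 2) ^ h - 1) ^ k := by
  intro k
  induction k with
  | zero =>
    intro _
    simp only [pow_zero, mul_one]
    apply card_le_card
    rw [A]
    exact filter_subset _ _
  | succ k ih =>
    intro hk1
    have hk : k ≤ C := by omega
    calc (A h C (k+1)).card * ((h * (h + 1) / 2) ^ h) ^ (k+1)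
        = (A h C (k+1)).card * (h * (h + 1) / 2) ^ h * ((h * (h + 1) / 2) ^ h) ^ k := by
          rw [pow_succ]; ring
      _ ≤ (A h C k).card * ((h * (h + 1) / 2) ^ h - 1) * ((h * (h + 1) / 2) ^ h) ^ k :=
          Nat.mul_le_mul_right _ (step h C hh hC hk)
      _ = (A h C k).card * ((h * (h + 1) / 2) ^ h) ^ k * ((h * (h + 1) / 2) ^ h - 1) := by
          ring
      _ ≤ (powersetCard (C + 1) (univ : Finset (Fin (h * (C + 1))))).card
            * ((h * (h + 1) / 2) ^ h - 1) ^ k * ((h * (h + 1) / 2) ^ h - 1) :=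
          Nat.mul_le_mul_right _ (ih (by omega))
      _ = (powersetCard (C + 1) (univ : Finset (Fin (h * (C + 1))))).card
            * ((h * (h + 1) / 2) ^ h - 1) ^ (k+1) := by
          rw [pow_succ]; ring

lemma fiber_const (hh : 1 ≤ h) {S S' : Finset (Fin (h * (C + 1)))}
    (hS : S.card = C + 1) (hS' : S'.card = C + 1) :
    (univ.filter (fun π : Equiv.Perm (Fin (h * (C + 1))) => Phi h C π = S)).card
      = (univ.filter (fun π : Equiv.Perm (Fin (h * (C + 1))) => Phi h C π = S')).card := by
  have hcards : S'.card = S.card := by rw [hS, hS']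
  have hcc : Fintype.card {x // x ∉ S'} = Fintype.card {x // x ∉ S} := by
    rw [Fintype.card_subtype_compl, Fintype.card_subtype_compl]
    congr 1
    rw [Fintype.card_coe, Fintype.card_coe, hcards]
  let g : {x // x ∈ S'} ≃ {x // x ∈ S} := Finset.equivOfCardEq hcards
  let g' : {x // x ∉ S'} ≃ {x // x ∉ S} := Fintype.equivOfCardEq hcc
  let e : Equiv.Perm (Fin (h * (C + 1))) := Equiv.subtypeCongr g g'
  have key : ∀ x, e x ∈ S ↔ x ∈ S' := by
    intro x
    by_cases hx : x ∈ S'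
    · have : e x = (g ⟨x, hx⟩ : Fin (h * (C + 1))) := by
        simp [e, Equiv.subtypeCongr, hx]
      rw [this]
      simpa [hx] using (g ⟨x, hx⟩).2
    · have : e x = (g' ⟨x, hx⟩ : Fin (h * (C + 1))) := by
        simp [e, Equiv.subtypeCongr, hx]
      rw [this]
      simpa [hx] using (g' ⟨x, hx⟩).2
  apply Finset.card_bij' (fun π _ => π * e) (fun π _ => π * e⁻¹)
  · intro π hπ
    rw [mem_filter] at hπ ⊢
    refine ⟨mem_univ _, ?_⟩
    ext j
    rw [mem_Phi]
    have : ((π * e) j : ℕ) = (π (e j) : ℕ) := rfl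
    rw [this]
    have h2 : (h - 1) * (C + 1) ≤ (π (e j) : ℕ) ↔ e j ∈ Phi h C π := (mem_Phi h C).symm
    rw [h2, hπ.2]
    exact key j
  · intro π hπ
    rw [mem_filter] at hπ ⊢
    refine ⟨mem_univ _, ?_⟩
    ext j
    rw [mem_Phi]
    have : ((π * e⁻¹) j : ℕ) = (π (e⁻¹ j) : ℕ) := rfl
    rw [this]
    have h2 : (h - 1) * (C + 1) ≤ (π (e⁻¹ j) : ℕ) ↔ e⁻¹ j ∈ Phi h C π := (mem_Phi h C).symm
    rw [h2, hπ.2]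
    have hk := key (e⁻¹ j)
    rw [show e (e⁻¹ j) = j from e.apply_symm_apply j] at hk
    exact hk.symm
  · intro π _; simp [mul_assoc]
  · intro π _; simp [mul_assoc]

lemma count_filter (hh : 1 ≤ h) (T : Finset (Finset (Fin (h * (C + 1)))))
    (hT : T ⊆ powersetCard (C + 1) univ) :
    (univ.filter (fun π : Equiv.Perm (Fin (h * (C + 1))) => Phi h C π ∈ T)).card
      = ∑ S ∈ T, (univ.filter
          (fun π : Equiv.Perm (Fin (h * (C + 1))) => Phi h C π = S)).card := by
  rw [Finset.card_eq_sum_card_fiberwise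
    (s := univ.filter (fun π : Equiv.Perm (Fin (h * (C + 1))) => Phi h C π ∈ T))
    (f := Phi h C) (t := T) (fun π hπ => (mem_filter.mp hπ).2)]
  apply Finset.sum_congr rfl
  intro S hS
  congr 1
  ext π
  simp only [mem_filter, mem_univ, true_and]
  constructor
  · rintro ⟨-, hp⟩; exact hp
  · rintro rfl; exact ⟨hS, rfl⟩

lemma main_identity (hh : 1 ≤ h) :
    (univ.filter (fun π : Equiv.Perm (Fin (h * (C + 1))) =>
        Phi h C π ∈ A h C (C + 1))).card
        * (powersetCard (C + 1) (univ : Finset (Fin (h * (C + 1))))).card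
      = (A h C (C + 1)).card * (h * (C + 1)).factorial := by
  set Ω := powersetCard (C + 1) (univ : Finset (Fin (h * (C + 1)))) with hΩ
  have hAsub : A h C (C + 1) ⊆ Ω := filter_subset _ _
  have hmemΩ : ∀ S ∈ Ω, S.card = C + 1 := fun S hS => (mem_powersetCard.mp hS).2
  have hall : (univ.filter (fun π : Equiv.Perm (Fin (h * (C + 1))) => Phi h C π ∈ Ω))
      = univ := by
    apply filter_true_of_mem
    intro π _
    rw [hΩ, mem_powersetCard]
    exact ⟨subset_univ _, Phi_card h C hh π⟩
  have huniv : (univ : Finset (Equiv.Perm (Fin (h * (C + 1))))).card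
      = (h * (C + 1)).factorial := by
    rw [card_univ, Fintype.card_perm, Fintype.card_fin]
  have h2 : ∑ S ∈ Ω, (univ.filter
      (fun π : Equiv.Perm (Fin (h * (C + 1))) => Phi h C π = S)).card
      = (h * (C + 1)).factorial := by
    rw [← count_filter h C hh Ω (subset_refl _), hall, huniv]
  calc (univ.filter (fun π : Equiv.Perm (Fin (h * (C + 1))) =>
        Phi h C π ∈ A h C (C + 1))).card * Ω.card
      = (∑ S ∈ A h C (C + 1), (univ.filter
          (fun π : Equiv.Perm (Fin (h * (C + 1))) => Phi h C π = S)).card) * Ω.card := by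
        rw [count_filter h C hh _ hAsub]
    _ = ∑ S ∈ A h C (C + 1), (univ.filter
          (fun π : Equiv.Perm (Fin (h * (C + 1))) => Phi h C π = S)).card * Ω.card := by
        rw [Finset.sum_mul]
    _ = ∑ S ∈ A h C (C + 1), (h * (C + 1)).factorial := by
        apply Finset.sum_congr rfl
        intro S hS
        have hScard : S.card = C + 1 := hmemΩ S (hAsub hS)
        calc (univ.filter (fun π : Equiv.Perm (Fin (h * (C + 1))) =>
              Phi h C π = S)).card * Ω.card
            = ∑ S' ∈ Ω, (univ.filter (fun π : Equiv.Perm (Fin (h * (C + 1))) =>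
                Phi h C π = S)).card := by rw [sum_const, smul_eq_mul, mul_comm]
          _ = ∑ S' ∈ Ω, (univ.filter (fun π : Equiv.Perm (Fin (h * (C + 1))) =>
                Phi h C π = S')).card := by
              apply Finset.sum_congr rfl
              intro S' hS'
              exact fiber_const h C hh hScard (hmemΩ S' hS')
          _ = (h * (C + 1)).factorial := h2
    _ = (A h C (C + 1)).card * (h * (C + 1)).factorial := by
        rw [sum_const, smul_eq_mul]

lemma ev_iff (hh : 1 ≤ h) (π : Equiv.Perm (Fin (h * (C + 1)))) :
    (∀ i : Fin (C + 1), ¬ ∀ j : Fin (h * (C + 1)), (j : ℕ) / h = (i : ℕ) →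
        (h - 1) * (C + 1) + 1 ≤ (π j : ℕ) + 1)
      ↔ Phi h C π ∈ A h C (C + 1) := by
  rw [mem_A]
  constructor
  · intro hev
    refine ⟨Phi_card h C hh π, fun i hi hsub => hev ⟨i, hi⟩ (fun j hj => ?_)⟩
    have hjm : j ∈ Phi h C π := hsub ((mem_colI h C).mpr hj)
    rw [mem_Phi] at hjm
    omega
  · rintro ⟨-, hpred⟩ i hcol
    apply hpred i i.isLt
    intro j hj
    rw [mem_colI] at hj
    rw [mem_Phi]
    have := hcol j hj
    omega



end Stmt13


open Classical in
/-- Probability (over a uniformly random permutation of the `h*(C+1)` slots, i.e. a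
uniformly random bay with `C+1` columns of `h` containers with labels `π(slot)+1`)
that no column is "special" (a column is special if all its containers have labels
at least `ω = (h-1)(C+1)+1`). -/
noncomputable def noSpecialProb (h C : ℕ) : ℝ :=
  ((Finset.univ.filter (fun π : Equiv.Perm (Fin (h * (C + 1))) =>
      ∀ i : Fin (C + 1), ¬ ∀ j : Fin (h * (C + 1)), (j : ℕ) / h = (i : ℕ) →
        (h - 1) * (C + 1) + 1 ≤ (π j : ℕ) + 1)).card : ℝ) /
    (Nat.factorial (h * (C + 1)) : ℝ)


/-- the probability that a uniformly random bay with `C+1` columns and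
`h` containers per column has no special column is at most `exp(-θ(C+1))` with
`θ = (1/(8h)) (2/(h(h+1)))^(2h)`, provided `C ≥ h+1`. -/

theorem stmt13 (h C : ℕ) (hh : 1 ≤ h) (hC : h + 1 ≤ C) :
    noSpecialProb h C ≤
      Real.exp (-((1 / (8 * (h : ℝ))) * (2 / ((h : ℝ) * ((h : ℝ) + 1))) ^ (2 * h)) *
        ((C : ℝ) + 1)) := by
  classical
  open Stmt13 in
  have hfilter : (Finset.univ.filter (fun π : Equiv.Perm (Fin (h * (C + 1))) =>
      ∀ i : Fin (C + 1), ¬ ∀ j : Fin (h * (C + 1)), (j : ℕ) / h = (i : ℕ) →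
        (h - 1) * (C + 1) + 1 ≤ (π j : ℕ) + 1))
      = (Finset.univ.filter (fun π : Equiv.Perm (Fin (h * (C + 1))) =>
        Phi h C π ∈ A h C (C + 1))) := by
    apply Finset.filter_congr
    intro π _
    exact Stmt13.ev_iff h C hh π
  set w := h * (h + 1) / 2 with hwdef
  set Q := w ^ h with hQdef
  have hw1 : 1 ≤ w := Stmt13.w_ge_one h hh
  have hQ1 : 1 ≤ Q := Nat.one_le_pow _ _ (by omega)
  have hΩpos : 0 < (powersetCard (C + 1) (univ : Finset (Fin (h * (C + 1))))).card := by
    rw [card_powersetCard, card_univ, Fintype.card_fin]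
    exact Nat.choose_pos (by nlinarith)
  have hΩR : (0:ℝ) < ((powersetCard (C + 1) (univ : Finset (Fin (h * (C + 1))))).card : ℝ) := by
    exact_mod_cast hΩpos
  have hfactR : (0:ℝ) < ((h * (C + 1)).factorial : ℝ) := by
    exact_mod_cast Nat.factorial_pos _
  have hP : noSpecialProb h C
      = ((A h C (C + 1)).card : ℝ)
        / ((powersetCard (C + 1) (univ : Finset (Fin (h * (C + 1))))).card : ℝ) := by
    rw [noSpecialProb, hfilter, div_eq_div_iff (ne_of_gt hfactR) (ne_of_gt hΩR)]
    exact_mod_cast main_identity h C hh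
  have hqR1 : (1:ℝ) ≤ (Q : ℝ) := by exact_mod_cast hQ1
  have hq0 : (0:ℝ) < (Q : ℝ) := by linarith
  have hQm1 : ((Q - 1 : ℕ) : ℝ) = (Q : ℝ) - 1 := by
    rw [Nat.cast_sub hQ1, Nat.cast_one]
  have hcast : ((A h C (C + 1)).card : ℝ) * (Q : ℝ) ^ (C + 1)
      ≤ ((powersetCard (C + 1) (univ : Finset (Fin (h * (C + 1))))).card : ℝ)
        * ((Q : ℝ) - 1) ^ (C + 1) := by
    rw [← hQm1]
    exact_mod_cast iterate h C hh hC (C + 1) le_rfl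
  have hstep1 : ((A h C (C + 1)).card : ℝ)
      / ((powersetCard (C + 1) (univ : Finset (Fin (h * (C + 1))))).card : ℝ)
      ≤ (((Q : ℝ) - 1) / (Q : ℝ)) ^ (C + 1) := by
    rw [div_pow, div_le_div_iff₀ hΩR (by positivity)]
    have := hcast
    rw [mul_comm ((powersetCard (C + 1) (univ : Finset (Fin (h * (C + 1))))).card : ℝ)] at this
    exact this
  have h1q : ((Q : ℝ) - 1) / (Q : ℝ) = 1 - 1 / (Q : ℝ) := by
    rw [sub_div, div_self (ne_of_gt hq0)]
  have h0le : (0:ℝ) ≤ 1 - 1 / (Q : ℝ) := by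
    have : 1 / (Q : ℝ) ≤ 1 := by rw [div_le_one hq0]; exact hqR1
    linarith
  have hexp1 : 1 - 1 / (Q : ℝ) ≤ Real.exp (-(1 / (Q : ℝ))) := by
    have := Real.add_one_le_exp (-(1 / (Q : ℝ))); linarith
  have hstep2 : (((Q : ℝ) - 1) / (Q : ℝ)) ^ (C + 1)
      ≤ Real.exp (-(1 / (Q : ℝ))) ^ (C + 1) := by
    rw [h1q]; exact pow_le_pow_left₀ h0le hexp1 _
  have hstep3 : Real.exp (-(1 / (Q : ℝ))) ^ (C + 1)
      = Real.exp (((C : ℝ) + 1) * (-(1 / (Q : ℝ)))) := by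
    rw [← Real.exp_nat_mul]
    push_cast
    ring_nf
  have hR1 : (1:ℝ) ≤ (h : ℝ) := by exact_mod_cast hh
  have hh1pos : (0:ℝ) < (h : ℝ) * ((h : ℝ) + 1) := by nlinarith
  have hwR : ((w : ℕ) : ℝ) = (h : ℝ) * ((h : ℝ) + 1) / 2 := by
    have h2w : 2 * w = h * (h + 1) := by
      obtain ⟨u, hu⟩ := Nat.even_mul_succ_self h
      omega
    have := congrArg (fun n : ℕ => (n : ℝ)) h2w
    push_cast at this
    linarith
  have hqval : ((Q : ℕ) : ℝ) = ((h : ℝ) * ((h : ℝ) + 1) / 2) ^ h := by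
    rw [hQdef]
    push_cast
    rw [hwR]
  have hρpos : (0:ℝ) < (2 / ((h : ℝ) * ((h : ℝ) + 1))) ^ h := by positivity
  have hρq : (2 / ((h : ℝ) * ((h : ℝ) + 1))) ^ h * (Q : ℝ) = 1 := by
    rw [hqval, ← mul_pow]
    have : 2 / ((h : ℝ) * ((h : ℝ) + 1)) * ((h : ℝ) * ((h : ℝ) + 1) / 2) = 1 := by
      field_simp
    rw [this, one_pow]
  have hinvq : 1 / (Q : ℝ) = (2 / ((h : ℝ) * ((h : ℝ) + 1))) ^ h := by
    rw [eq_comm, eq_div_iff (ne_of_gt hq0), mul_comm]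
    rw [mul_comm] at hρq
    exact hρq
  have hρ1 : (2 / ((h : ℝ) * ((h : ℝ) + 1))) ^ h ≤ 1 := by
    apply pow_le_one₀ (div_nonneg (by norm_num) (le_of_lt hh1pos))
    rw [div_le_one hh1pos]
    nlinarith
  have hθρ : (1 / (8 * (h : ℝ))) * (2 / ((h : ℝ) * ((h : ℝ) + 1))) ^ (2 * h)
      ≤ (2 / ((h : ℝ) * ((h : ℝ) + 1))) ^ h := by
    have hsq : (2 / ((h : ℝ) * ((h : ℝ) + 1))) ^ (2 * h)
        = ((2 / ((h : ℝ) * ((h : ℝ) + 1))) ^ h) ^ 2 := by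
      rw [mul_comm 2 h, pow_mul]
    rw [hsq]
    have h8 : 1 / (8 * (h : ℝ)) ≤ 1 := by
      rw [div_le_one (by linarith)]
      linarith
    have hρ2 : ((2 / ((h : ℝ) * ((h : ℝ) + 1))) ^ h) ^ 2
        ≤ (2 / ((h : ℝ) * ((h : ℝ) + 1))) ^ h := by
      have := mul_le_mul_of_nonneg_right hρ1 (le_of_lt hρpos)
      rw [one_mul] at this
      rw [sq]
      exact this
    calc 1 / (8 * (h : ℝ)) * ((2 / ((h : ℝ) * ((h : ℝ) + 1))) ^ h) ^ 2
        ≤ 1 * ((2 / ((h : ℝ) * ((h : ℝ) + 1))) ^ h) ^ 2 :=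
          mul_le_mul_of_nonneg_right h8 (sq_nonneg _)
      _ = ((2 / ((h : ℝ) * ((h : ℝ) + 1))) ^ h) ^ 2 := one_mul _
      _ ≤ (2 / ((h : ℝ) * ((h : ℝ) + 1))) ^ h := hρ2
  have hfinal : Real.exp (((C : ℝ) + 1) * (-(1 / (Q : ℝ))))
      ≤ Real.exp (-((1 / (8 * (h : ℝ))) * (2 / ((h : ℝ) * ((h : ℝ) + 1))) ^ (2 * h)) *
        ((C : ℝ) + 1)) := by
    apply Real.exp_le_exp.mpr
    rw [hinvq]
    have hC0 : (0:ℝ) ≤ (C : ℝ) + 1 := by positivity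
    have h2 := neg_le_neg (mul_le_mul_of_nonneg_left hθρ hC0)
    calc ((C : ℝ) + 1) * (-((2 / ((h : ℝ) * ((h : ℝ) + 1))) ^ h))
        = -(((C : ℝ) + 1) * (2 / ((h : ℝ) * ((h : ℝ) + 1))) ^ h) := by ring
      _ ≤ -(((C : ℝ) + 1) *
          ((1 / (8 * (h : ℝ))) * (2 / ((h : ℝ) * ((h : ℝ) + 1))) ^ (2 * h))) := h2
      _ = -((1 / (8 * (h : ℝ))) * (2 / ((h : ℝ) * ((h : ℝ) + 1))) ^ (2 * h)) *
          ((C : ℝ) + 1) := by ring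
  calc noSpecialProb h C
      = ((A h C (C + 1)).card : ℝ)
        / ((powersetCard (C + 1) (univ : Finset (Fin (h * (C + 1))))).card : ℝ) := hP
    _ ≤ (((Q : ℝ) - 1) / (Q : ℝ)) ^ (C + 1) := hstep1
    _ ≤ Real.exp (-(1 / (Q : ℝ))) ^ (C + 1) := hstep2
    _ = Real.exp (((C : ℝ) + 1) * (-(1 / (Q : ℝ)))) := hstep3
    _ ≤ _ := hfinal
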